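/- Let μ be a lower semicontinuous submeasure on ω. Define μ^{<ω} on subsets of [ω]^{<ω}∖{∅} by μ^{<ω}(b) = inf{μ(a) : a ⊆ ω and x ∩ a ≠ ∅ for every x ∈ b}. Then μ^{<ω} is a lower semicontinuous submeasure on the countable set [ω]^{<ω}∖{∅}, and {b : μ^{<ω}(b) < ∞} = J^{<ω}, where J = {a ⊆ ω : μ(a) < ∞}. -/

import Mathlib

open Set ENNReal

/-- The countable set `[ω]^{<ω} ∖ {∅}` of nonempty finite subsets of `ω`. -/
abbrev FinPos := {s : Finset ℕ // s.Nonempty}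

/-- The submeasure `μ^{<ω}` on `[ω]^{<ω} ∖ {∅}` derived from a submeasure `μ` on `ω`:
`μ^{<ω}(b) = inf {μ(a) : a ⊆ ω and x ∩ a ≠ ∅ for every x ∈ b}`. -/
noncomputable def muFin (μ : Set ℕ → ℝ≥0∞) (b : Set FinPos) : ℝ≥0∞ :=
  ⨅ (a : Set ℕ) (_ : ∀ x ∈ b, ∃ k ∈ (x : FinPos).1, k ∈ a), μ a

/-- If `μ` is a lower semicontinuous submeasure on `ω` then `μ^{<ω}` is a lower
semicontinuous submeasure on `[ω]^{<ω} ∖ {∅}`, and its finite sets form exactly the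
ideal `J^{<ω}` where `J = {a : μ(a) < ∞}`. -/
theorem muFin_lsc_submeasure
    (μ : Set ℕ → ℝ≥0∞)
    (h0 : μ ∅ = 0)
    (hmono : ∀ a b : Set ℕ, a ⊆ b → μ a ≤ μ b)
    (hsub : ∀ a b : Set ℕ, μ (a ∪ b) ≤ μ a + μ b)
    (hlsc : ∀ a : Set ℕ, μ a = ⨆ (c : Finset ℕ) (_ : ↑c ⊆ a), μ ↑c) :
    muFin μ ∅ = 0 ∧
    (∀ a b : Set FinPos, a ⊆ b → muFin μ a ≤ muFin μ b) ∧
    (∀ a b : Set FinPos, muFin μ (a ∪ b) ≤ muFin μ a + muFin μ b) ∧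
    (∀ b : Set FinPos, muFin μ b = ⨆ (c : Finset FinPos) (_ : ↑c ⊆ b), muFin μ ↑c) ∧
    {b : Set FinPos | muFin μ b < ⊤} =
      {b : Set FinPos | ∃ a : Set ℕ, μ a < ⊤ ∧ ∀ x ∈ b, ∃ k ∈ (x : FinPos).1, k ∈ a} := by
  have hle : ∀ (b : Set FinPos) (a : Set ℕ),
      (∀ x ∈ b, ∃ k ∈ (x : FinPos).1, k ∈ a) → muFin μ b ≤ μ a := by
    intro b a h
    exact iInf₂_le a h
  have hmono' : ∀ a b : Set FinPos, a ⊆ b → muFin μ a ≤ muFin μ b := by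
    intro a b hab
    refine le_iInf₂ fun s hs => hle a s fun x hx => hs x (hab hx)
  refine ⟨?_, hmono', ?_, ?_, ?_⟩
  · -- muFin μ ∅ = 0
    have := hle ∅ ∅ (by simp)
    rw [h0] at this
    exact le_antisymm this zero_le
  · -- subadditivity
    intro a b
    have key : muFin μ a + muFin μ b =
        ⨅ (a1 : Set ℕ) (_ : ∀ x ∈ a, ∃ k ∈ (x : FinPos).1, k ∈ a1)
          (a2 : Set ℕ) (_ : ∀ x ∈ b, ∃ k ∈ (x : FinPos).1, k ∈ a2), (μ a1 + μ a2) := by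
      simp only [muFin]
      rw [ENNReal.iInf_add]
      refine iInf_congr fun a1 => ?_
      rw [ENNReal.iInf_add]
      refine iInf_congr fun h1 => ?_
      rw [ENNReal.add_iInf]
      exact iInf_congr fun a2 => ENNReal.add_iInf
    rw [key]
    refine le_iInf fun a1 => le_iInf fun h1 => le_iInf fun a2 => le_iInf fun h2 => ?_
    refine le_trans (hle _ (a1 ∪ a2) ?_) (hsub a1 a2)
    rintro x (hx | hx)
    · obtain ⟨k, hk, hka⟩ := h1 x hx
      exact ⟨k, hk, Or.inl hka⟩
    · obtain ⟨k, hk, hka⟩ := h2 x hx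
      exact ⟨k, hk, Or.inr hka⟩
  · -- lower semicontinuity
    intro b
    refine le_antisymm ?_ (iSup₂_le fun c hc => hmono' _ _ hc)
    refine le_of_forall_gt_imp_ge_of_dense fun r hr => ?_
    have hac : ∀ c : Finset FinPos, ↑c ⊆ b → ∃ a : Set ℕ,
        (∀ x ∈ (↑c : Set FinPos), ∃ k ∈ (x : FinPos).1, k ∈ a) ∧ μ a < r := by
      intro c hc
      have h1 : muFin μ ↑c < r :=
        lt_of_le_of_lt (le_iSup₂ (f := fun (c : Finset FinPos) (_ : ↑c ⊆ b) =>
          muFin μ (↑c : Set FinPos)) c hc) hr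
      simp only [muFin, iInf_lt_iff] at h1
      obtain ⟨a, hcov, hlt⟩ := h1
      exact ⟨a, hcov, hlt⟩
    haveI : Nonempty {c : Finset FinPos // (↑c : Set FinPos) ⊆ b} := ⟨⟨∅, by simp⟩⟩
    haveI : IsDirected {c : Finset FinPos // (↑c : Set FinPos) ⊆ b} (· ≤ ·) := by
      constructor
      intro x y
      refine ⟨⟨x.1 ∪ y.1, ?_⟩, ?_, ?_⟩
      · simp only [Finset.coe_union, Set.union_subset_iff]; exact ⟨x.2, y.2⟩
      · exact Subtype.coe_le_coe.mp Finset.subset_union_left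
      · exact Subtype.coe_le_coe.mp Finset.subset_union_right
    choose A hA hAr using fun c : {c : Finset FinPos // (↑c : Set FinPos) ⊆ b} => hac c.1 c.2
    have hgex : ∀ (c : {c : Finset FinPos // (↑c : Set FinPos) ⊆ b}) (x : FinPos),
        ∃ k, k ∈ x.1 ∧ (x ∈ c.1 → k ∈ A c) := by
      intro c x
      by_cases hx : x ∈ c.1
      · obtain ⟨k, hk1, hk2⟩ := hA c x (Finset.mem_coe.mpr hx)
        exact ⟨k, hk1, fun _ => hk2⟩
      · exact ⟨x.2.choose, x.2.choose_spec, fun h => absurd h hx⟩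
    choose g hg1 hg2 using hgex
    set U : Ultrafilter {c : Finset FinPos // (↑c : Set FinPos) ⊆ b} := Ultrafilter.of Filter.atTop with hUdef
    have hU : (U : Filter {c : Finset FinPos // (↑c : Set FinPos) ⊆ b}) ≤ Filter.atTop :=
      Ultrafilter.of_le _
    have hKex : ∀ x : FinPos, ∃ m, x ∈ b →
        m ∈ x.1 ∧ {c : {c : Finset FinPos // (↑c : Set FinPos) ⊆ b} | g c x = m} ∈ U := by
      intro x
      by_cases hx : x ∈ b
      · have huniv : (⋃ k ∈ (↑x.1 : Set ℕ),
            {c : {c : Finset FinPos // (↑c : Set FinPos) ⊆ b} | g c x = k}) = Set.univ := by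
          refine eq_univ_of_forall fun c => ?_
          exact mem_biUnion (Finset.mem_coe.mpr (hg1 c x)) rfl
        have hmem : (⋃ k ∈ (↑x.1 : Set ℕ),
            {c : {c : Finset FinPos // (↑c : Set FinPos) ⊆ b} | g c x = k}) ∈ U := by
          rw [huniv]; exact Filter.univ_mem
        rw [Ultrafilter.finite_biUnion_mem_iff x.1.finite_toSet] at hmem
        obtain ⟨m, hm1, hm2⟩ := hmem
        exact ⟨m, fun _ => ⟨Finset.mem_coe.mp hm1, hm2⟩⟩
      · exact ⟨0, fun h => absurd h hx⟩
    choose K hK using hKex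
    refine le_trans (hle b (K '' b) fun x hx => ⟨K x, (hK x hx).1, mem_image_of_mem K hx⟩) ?_
    rw [hlsc (K '' b)]
    refine iSup₂_le fun e he => ?_
    -- for each m ∈ e, a witness x ∈ b with K x = m
    choose w hw1 hw2 using fun m : {m // m ∈ e} => he m.2
    set d : Finset FinPos := e.attach.image w with hd_def
    have hd : ↑d ⊆ b := by
      intro x hx
      simp only [hd_def, Finset.coe_image, Set.mem_image] at hx
      obtain ⟨m, _, rfl⟩ := hx
      exact hw1 m
    set dd : {c : Finset FinPos // (↑c : Set FinPos) ⊆ b} := ⟨d, hd⟩ with hdd_def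
    have hT : ({c : {c : Finset FinPos // (↑c : Set FinPos) ⊆ b} | dd ≤ c} ∩
        ⋂ x ∈ (↑d : Set FinPos), {c : {c : Finset FinPos // (↑c : Set FinPos) ⊆ b} | g c x = K x}) ∈ U := by
      refine Filter.inter_mem (hU (Filter.mem_atTop dd)) ?_
      rw [Filter.biInter_mem d.finite_toSet]
      intro x hx
      exact (hK x (hd hx)).2
    obtain ⟨c, hc1, hc2⟩ := U.nonempty_of_mem hT
    have hsubset : ↑e ⊆ A c := by
      intro m hm
      set x : FinPos := w ⟨m, hm⟩ with hx_def
      have hxd : x ∈ d := by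
        simp only [hd_def, Finset.mem_image]
        exact ⟨⟨m, hm⟩, Finset.mem_attach _ _, rfl⟩
      have hxc : x ∈ c.1 := hc1 hxd
      have hgcx : g c x = K x := by
        have := mem_iInter₂.mp hc2 x (Finset.mem_coe.mpr hxd)
        exact this
      have : K x ∈ A c := hgcx ▸ hg2 c x hxc
      rwa [hw2 ⟨m, hm⟩] at this
    exact le_trans (hmono _ _ hsubset) (hAr c).le
  · -- the ideal of finite-measure sets
    ext b
    simp only [mem_setOf_eq, muFin, iInf_lt_iff]
    constructor
    · rintro ⟨a, hc, hlt⟩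
      exact ⟨a, hlt, hc⟩
    · rintro ⟨a, hlt, hc⟩
      exact ⟨a, hc, hlt⟩
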